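/- Under the hypotheses of the previous Gronwall estimate (|S_i(t)| ≤ ∫₀ᵗ (B|S_i| + B̄ Σ_k |S_k| + |f_i|) du for all i and t ∈ [0,T]), each component satisfies the refined bound: for all i and t ∈ [0,T], |S_i(t)| ≤ ( ∫₀ᵀ |f_i(u)| du + ( ∫₀ᵀ Σ_{k=1}^N |f_k(u)| du ) · B̄ T e^{(B + N B̄) T} ) · e^{B T}. -/

import Mathlib

open MeasureTheory Set

lemma gronwall_aux {T K C : ℝ} (hK : 0 ≤ K) (hC : 0 ≤ C)
    {g : ℝ → ℝ} (hg : Continuous g) (hgnn : ∀ t, 0 ≤ g t)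
    (h : ∀ t ∈ Set.Icc (0:ℝ) T, g t ≤ C + ∫ u in (0:ℝ)..t, K * g u) :
    ∀ t ∈ Set.Icc (0:ℝ) T, g t ≤ C * Real.exp (K * t) := by
  intro t ht
  set F : ℝ → ℝ := fun t => C + ∫ u in (0:ℝ)..t, K * g u with hFdef
  have hgK : Continuous (fun u => K * g u) := continuous_const.mul hg
  have hderiv : ∀ s : ℝ, HasDerivAt F (K * g s) s := fun s =>
    ((hgK.integral_hasStrictDerivAt 0 s).hasDerivAt).const_add C
  have hFcont : Continuous F :=
    continuous_iff_continuousAt.2 fun s => (hderiv s).continuousAt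
  have hFnn : ∀ s ∈ Set.Icc (0:ℝ) T, 0 ≤ F s := by
    intro s hs
    have : 0 ≤ ∫ u in (0:ℝ)..s, K * g u :=
      intervalIntegral.integral_nonneg hs.1 (fun u _ => mul_nonneg hK (hgnn u))
    simpa [hFdef] using add_nonneg hC this
  have key := norm_le_gronwallBound_of_norm_deriv_right_le
    (f := F) (f' := fun s => K * g s) (δ := C) (K := K) (ε := 0) (a := 0) (b := T)
    hFcont.continuousOn (fun s _ => (hderiv s).hasDerivWithinAt)
    (by simp [hFdef, abs_of_nonneg hC])
    (fun s hs => by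
      have hsIcc : s ∈ Set.Icc (0:ℝ) T := ⟨hs.1, le_of_lt hs.2⟩
      have h1 : g s ≤ F s := h s hsIcc
      have h2 : ‖K * g s‖ = K * g s := by
        rw [Real.norm_eq_abs, abs_of_nonneg (mul_nonneg hK (hgnn s))]
      rw [h2, Real.norm_eq_abs, abs_of_nonneg (hFnn s hsIcc)]
      nlinarith [hgnn s, hFnn s hsIcc])
    t ht
  have hnorm : ‖F t‖ = F t := by rw [Real.norm_eq_abs, abs_of_nonneg (hFnn t ht)]
  rw [hnorm] at key
  calc g t ≤ F t := h t ht
    _ ≤ gronwallBound C K 0 (t - 0) := key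
    _ = C * Real.exp (K * t) := by rw [sub_zero, gronwallBound_ε0]

set_option maxHeartbeats 1000000 in
/-- Refined componentwise Gronwall estimate for the sensitivity processes. -/
theorem gronwall_component_estimate
    (N : ℕ) (T B Bbar : ℝ) (hT : 0 < T) (hB : 0 ≤ B) (hBbar : 0 ≤ Bbar)
    (S : ℝ → Fin N → ℝ) (hS : Continuous S)
    (f : Fin N → ℝ → ℝ)
    (hf : ∀ i, IntervalIntegrable (f i) MeasureTheory.volume 0 T)
    (hineq : ∀ (i : Fin N), ∀ t ∈ Set.Icc (0:ℝ) T,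
      |S t i| ≤ ∫ u in (0:ℝ)..t,
        (B * |S u i| + Bbar * ∑ k, |S u k| + |f i u|)) :
    ∀ (i : Fin N), ∀ t ∈ Set.Icc (0:ℝ) T,
      |S t i| ≤ ((∫ u in (0:ℝ)..T, |f i u|)
          + (∫ u in (0:ℝ)..T, ∑ k, |f k u|) * Bbar * T * Real.exp ((B + N * Bbar) * T))
        * Real.exp (B * T) := by
  have hKnn : (0:ℝ) ≤ B + N * Bbar := by positivity
  have hScont : ∀ k : Fin N, Continuous fun u => |S u k| :=
    fun k => ((continuous_apply k).comp hS).abs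
  have hGcont : Continuous fun u => ∑ k, |S u k| :=
    continuous_finset_sum _ fun k _ => hScont k
  have hGnn : ∀ u : ℝ, (0:ℝ) ≤ ∑ k, |S u k| :=
    fun u => Finset.sum_nonneg fun k _ => abs_nonneg _
  have hFnn : ∀ u : ℝ, (0:ℝ) ≤ ∑ k, |f k u| :=
    fun u => Finset.sum_nonneg fun k _ => abs_nonneg _
  have hFint : IntervalIntegrable (fun u => ∑ k, |f k u|) volume 0 T := by
    have h := IntervalIntegrable.sum (μ := volume) (a := (0:ℝ)) (b := T)
      (f := fun (k : Fin N) u => |f k u|) Finset.univ (fun k _ => (hf k).abs)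
    simpa only [Finset.sum_fn] using h
  have hIFnn : 0 ≤ ∫ u in (0:ℝ)..T, ∑ k, |f k u| :=
    intervalIntegral.integral_nonneg hT.le fun u _ => hFnn u
  have hsub : ∀ t ∈ Set.Icc (0:ℝ) T, Set.uIcc (0:ℝ) t ⊆ Set.uIcc (0:ℝ) T := by
    intro t ht
    exact Set.uIcc_subset_uIcc Set.left_mem_uIcc
      (by rw [Set.uIcc_of_le hT.le]; exact ht)
  -- Step 1: Gronwall for the sum
  have step1 : ∀ t ∈ Set.Icc (0:ℝ) T,
      ∑ k, |S t k| ≤ (∫ u in (0:ℝ)..T, ∑ k, |f k u|) * Real.exp ((B + N * Bbar) * t) := by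
    apply gronwall_aux hKnn hIFnn hGcont hGnn
    intro t ht
    have hint : ∀ k : Fin N, IntervalIntegrable
        (fun u => B * |S u k| + Bbar * ∑ j, |S u j| + |f k u|) volume 0 t :=
      fun k => (((continuous_const.mul (hScont k)).add
        (continuous_const.mul hGcont)).intervalIntegrable 0 t).add
        (((hf k).abs).mono_set (hsub t ht))
    calc ∑ k, |S t k|
        ≤ ∑ k, ∫ u in (0:ℝ)..t, (B * |S u k| + Bbar * ∑ j, |S u j| + |f k u|) :=
          Finset.sum_le_sum fun k _ => hineq k t ht
      _ = ∫ u in (0:ℝ)..t, ∑ k, (B * |S u k| + Bbar * ∑ j, |S u j| + |f k u|) :=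
          (intervalIntegral.integral_finset_sum fun k _ => hint k).symm
      _ = ∫ u in (0:ℝ)..t, ((B + N * Bbar) * ∑ j, |S u j| + ∑ k, |f k u|) := by
          apply intervalIntegral.integral_congr
          intro u _
          simp only [Finset.sum_add_distrib, ← Finset.mul_sum, Finset.sum_const,
            Finset.card_univ, Fintype.card_fin, nsmul_eq_mul]
          ring
      _ = (∫ u in (0:ℝ)..t, (B + N * Bbar) * ∑ j, |S u j|)
            + ∫ u in (0:ℝ)..t, ∑ k, |f k u| :=
          intervalIntegral.integral_add
            ((continuous_const.mul hGcont).intervalIntegrable 0 t)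
            (hFint.mono_set (hsub t ht))
      _ ≤ (∫ u in (0:ℝ)..t, (B + N * Bbar) * ∑ j, |S u j|)
            + ∫ u in (0:ℝ)..T, ∑ k, |f k u| := by
          refine add_le_add (le_refl _) ?_
          exact intervalIntegral.integral_mono_interval le_rfl ht.1 ht.2
            (Filter.Eventually.of_forall fun u => hFnn u) hFint
      _ = (∫ u in (0:ℝ)..T, ∑ k, |f k u|)
            + ∫ u in (0:ℝ)..t, (B + N * Bbar) * ∑ j, |S u j| := by ring
  set M : ℝ := (∫ u in (0:ℝ)..T, ∑ k, |f k u|) * Real.exp ((B + N * Bbar) * T) with hMdef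
  have hMnn : 0 ≤ M := mul_nonneg hIFnn (Real.exp_pos _).le
  have hM : ∀ u ∈ Set.Icc (0:ℝ) T, ∑ k, |S u k| ≤ M := by
    intro u hu
    refine (step1 u hu).trans ?_
    exact mul_le_mul_of_nonneg_left
      (Real.exp_le_exp.2 (mul_le_mul_of_nonneg_left hu.2 hKnn)) hIFnn
  -- Step 2
  intro i t ht
  have hfiab : 0 ≤ ∫ u in (0:ℝ)..T, |f i u| :=
    intervalIntegral.integral_nonneg hT.le fun u _ => abs_nonneg _
  have hCnn : 0 ≤ (∫ u in (0:ℝ)..T, |f i u|) + Bbar * M * T := by positivity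
  have h2 : ∀ s ∈ Set.Icc (0:ℝ) T,
      |S s i| ≤ ((∫ u in (0:ℝ)..T, |f i u|) + Bbar * M * T) + ∫ u in (0:ℝ)..s, B * |S u i| := by
    intro s hs
    have hint1 : IntervalIntegrable
        (fun u => B * |S u i| + Bbar * ∑ j, |S u j| + |f i u|) volume 0 s :=
      (((continuous_const.mul (hScont i)).add
        (continuous_const.mul hGcont)).intervalIntegrable 0 s).add
        (((hf i).abs).mono_set (hsub s hs))
    have hint2 : IntervalIntegrable
        (fun u => B * |S u i| + Bbar * M + |f i u|) volume 0 s :=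
      (((continuous_const.mul (hScont i)).add continuous_const).intervalIntegrable 0 s).add
        (((hf i).abs).mono_set (hsub s hs))
    calc |S s i|
        ≤ ∫ u in (0:ℝ)..s, (B * |S u i| + Bbar * ∑ j, |S u j| + |f i u|) := hineq i s hs
      _ ≤ ∫ u in (0:ℝ)..s, (B * |S u i| + Bbar * M + |f i u|) := by
          refine intervalIntegral.integral_mono_on hs.1 hint1 hint2 ?_
          intro u hu
          have : ∑ j, |S u j| ≤ M := hM u ⟨hu.1, hu.2.trans hs.2⟩
          have := mul_le_mul_of_nonneg_left this hBbar
          linarith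
      _ = (∫ u in (0:ℝ)..s, B * |S u i|) + ((∫ u in (0:ℝ)..s, (Bbar * M : ℝ))
            + ∫ u in (0:ℝ)..s, |f i u|) := by
          rw [← intervalIntegral.integral_add (intervalIntegrable_const)
            (((hf i).abs).mono_set (hsub s hs)),
            ← intervalIntegral.integral_add (f := fun u => B * |S u i|)
              ((continuous_const.mul (hScont i)).intervalIntegrable 0 s)
              ((intervalIntegrable_const).add (((hf i).abs).mono_set (hsub s hs)))]
          apply intervalIntegral.integral_congr
          intro u _; ring
      _ ≤ (∫ u in (0:ℝ)..s, B * |S u i|) + (Bbar * M * T + ∫ u in (0:ℝ)..T, |f i u|) := by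
          refine add_le_add (le_refl _) (add_le_add ?_ ?_)
          · rw [intervalIntegral.integral_const, smul_eq_mul]
            have : s - 0 ≤ T := by linarith [hs.2]
            nlinarith [mul_nonneg hBbar hMnn]
          · exact intervalIntegral.integral_mono_interval le_rfl hs.1 hs.2
              (Filter.Eventually.of_forall fun u => abs_nonneg _) (hf i).abs
      _ = ((∫ u in (0:ℝ)..T, |f i u|) + Bbar * M * T) + ∫ u in (0:ℝ)..s, B * |S u i| := by ring
  have key := gronwall_aux hB hCnn ((hScont i)) (fun u => abs_nonneg _) h2 t ht
  calc |S t i| ≤ ((∫ u in (0:ℝ)..T, |f i u|) + Bbar * M * T) * Real.exp (B * t) := key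
    _ ≤ ((∫ u in (0:ℝ)..T, |f i u|) + Bbar * M * T) * Real.exp (B * T) :=
        mul_le_mul_of_nonneg_left
          (Real.exp_le_exp.2 (mul_le_mul_of_nonneg_left ht.2 hB)) hCnn
    _ = ((∫ u in (0:ℝ)..T, |f i u|)
          + (∫ u in (0:ℝ)..T, ∑ k, |f k u|) * Bbar * T * Real.exp ((B + N * Bbar) * T))
        * Real.exp (B * T) := by rw [hMdef]; ring
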